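/- arXiv:1908.08565 — 4 statements merged into one kernel-verified Lean document; each statement's English description precedes it below -/
import Mathlib

section
/- Set J_α = ¼ Σ_{q=1}^l |α_q| m_q (m_q − 1) and suppose J_α < 1. Then the fixed-point equation X = Φ(X) has a unique solution X_c in [0,1]^n, X_c is a constant vector, and for every X ∈ X_f, ‖X − X_c‖₁ ≤ (5000 C_α² / (1 − J_α)) · n^{7/8}. -/
open MeasureTheory ProbabilityTheory Real Set

noncomputable section

/-- The real-valued vertex configuration associated to a boolean configuration. -/
def boolToR (n : ℕ) (X : Fin n → Bool) : Fin n → ℝ := fun i => if X i then 1 else 0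

/-- The 1-norm on ℝⁿ. -/
def norm1 (n : ℕ) (x : Fin n → ℝ) : ℝ := ∑ i, |x i|

/-- `C_j^m(X)`: the sum over (m-1)-tuples of pairwise distinct indices, all distinct
from `j`, of the products of the corresponding entries of `X`; `C_j^1 = 1`. -/
def Cvec (n m : ℕ) (X : Fin n → ℝ) (j : Fin n) : ℝ :=
  ∑ g ∈ Finset.univ.filter (fun g : Fin (m - 1) ↪ Fin n => ∀ k, g k ≠ j),
    ∏ k, X (g k)

/-- The subgraph counting function with parameters `p`, `m₁,…,m_l`, `α₁,…,α_l`. -/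
def scf (n l : ℕ) (p : ℝ) (m : Fin l → ℕ) (α : Fin l → ℝ) (X : Fin n → ℝ) : ℝ :=
  (∑ q, (α q / (n : ℝ) ^ (m q - 1)) * ∑ g : Fin (m q) ↪ Fin n, ∏ k, X (g k)) +
    Real.log (p / (1 - p)) * ∑ i, |X i|

/-- The discrete derivative `∂ⱼf(X) = (f(X^{j←1}) - f(X^{j←0}))/2`. -/
def dder (n : ℕ) (f : (Fin n → ℝ) → ℝ) (X : Fin n → ℝ) (j : Fin n) : ℝ :=
  (f (Function.update X j 1) - f (Function.update X j 0)) / 2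

/-- The polynomial extension of the discrete gradient of the subgraph counting function:
`∂ⱼf(X) = Σ_q (m_q α_q/(2 n^{m_q-1})) C_j^{m_q}(X) + ½ log(p/(1-p))`. -/
def gradf (n l : ℕ) (p : ℝ) (m : Fin l → ℕ) (α : Fin l → ℝ) (X : Fin n → ℝ)
    (j : Fin n) : ℝ :=
  (∑ q, ((m q : ℝ) * α q / (2 * (n : ℝ) ^ (m q - 1))) * Cvec n (m q) X j) +
    Real.log (p / (1 - p)) / 2

/-- `C_α = max{2, ½|log(p/(1-p))| + ½ Σ_q |α_q| m_q (m_q - 1)}`. -/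
def Calpha (l : ℕ) (p : ℝ) (m : Fin l → ℕ) (α : Fin l → ℝ) : ℝ :=
  max 2 (|Real.log (p / (1 - p))| / 2 + (∑ q, |α q| * (m q : ℝ) * ((m q : ℝ) - 1)) / 2)

/-- `Φ(X) = (1ₙ + tanh(∇f(X)))/2`, entrywise. -/
def Phi (n l : ℕ) (p : ℝ) (m : Fin l → ℕ) (α : Fin l → ℝ) (X : Fin n → ℝ) :
    Fin n → ℝ :=
  fun j => (1 + Real.tanh (gradf n l p m α X j)) / 2

/-- The set `X_f` of near fixed points of `X ↦ (1ₙ + tanh(∇f(X)))/2` in `[0,1]ⁿ`. -/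
def Xf (n l : ℕ) (p : ℝ) (m : Fin l → ℕ) (α : Fin l → ℝ) : Set (Fin n → ℝ) :=
  {X | (∀ i, X i ∈ Set.Icc (0:ℝ) 1) ∧
    norm1 n (fun j => X j - Phi n l p m α X j) ≤
      5000 * (Calpha l p m α) ^ 2 * (n : ℝ) ^ ((7:ℝ)/8)}

/-- The one-dimensional fixed point function `φ_α`. -/
def phiA (n l : ℕ) (p : ℝ) (m : Fin l → ℕ) (α : Fin l → ℝ) (x : ℝ) : ℝ :=
  (1 + Real.tanh (Real.log (p / (1 - p)) / 2 +
    (∑ q, (m q : ℝ) * α q * (∏ i ∈ Finset.Icc 1 (m q - 1), (1 - (i : ℝ) / n)) *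
      x ^ (m q - 1)) / 2)) / 2


section Stmt14Aux

set_option maxHeartbeats 1000000


lemma tanh_hasDerivAt (x : ℝ) : HasDerivAt Real.tanh (1 / Real.cosh x ^ 2) x := by
  have hfun : Real.tanh = fun y => Real.sinh y / Real.cosh y :=
    funext fun y => Real.tanh_eq_sinh_div_cosh y
  have h := (Real.hasDerivAt_sinh x).div (Real.hasDerivAt_cosh x) (Real.cosh_pos x).ne'
  rw [hfun]
  convert h using 1
  have := Real.cosh_sq_sub_sinh_sq x
  · rfl
  · rfl
  · rfl
  · rw [← Real.cosh_sq_sub_sinh_sq x]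
    ring

lemma tanh_lip (a b : ℝ) : |Real.tanh a - Real.tanh b| ≤ |a - b| := by
  have h := Convex.norm_image_sub_le_of_norm_hasDerivWithin_le
    (f := Real.tanh) (f' := fun x => 1 / Real.cosh x ^ 2) (s := Set.univ) (C := 1)
    (fun x _ => (tanh_hasDerivAt x).hasDerivWithinAt)
    (fun x _ => by
      rw [Real.norm_eq_abs, abs_of_nonneg (by positivity), div_le_one (by positivity)]
      nlinarith [Real.cosh_sq_sub_sinh_sq x, sq_nonneg (Real.sinh x)])
    convex_univ (Set.mem_univ b) (Set.mem_univ a)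
  simpa [Real.norm_eq_abs] using h

lemma tanh_lt_one (x : ℝ) : Real.tanh x < 1 := by
  rw [Real.tanh_eq_sinh_div_cosh, div_lt_one (Real.cosh_pos x)]
  exact Real.sinh_lt_cosh x

lemma neg_one_lt_tanh (x : ℝ) : -1 < Real.tanh x := by
  have h : Real.tanh (-x) < 1 := by
    rw [Real.tanh_eq_sinh_div_cosh, div_lt_one (Real.cosh_pos _)]
    exact Real.sinh_lt_cosh _
  rw [Real.tanh_neg] at h
  linarith

lemma abs_prod_sub_prod_le {ι : Type*} (s : Finset ι) (f g : ι → ℝ)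
    (hf : ∀ i, f i ∈ Set.Icc (0:ℝ) 1) (hg : ∀ i, g i ∈ Set.Icc (0:ℝ) 1) :
    |∏ i ∈ s, f i - ∏ i ∈ s, g i| ≤ ∑ i ∈ s, |f i - g i| := by
  classical
  induction s using Finset.induction with
  | empty => simp
  | insert a s h ih =>
    rw [Finset.prod_insert h, Finset.prod_insert h, Finset.sum_insert h]
    have key : f a * ∏ i ∈ s, f i - g a * ∏ i ∈ s, g i
        = (f a - g a) * ∏ i ∈ s, f i + g a * (∏ i ∈ s, f i - ∏ i ∈ s, g i) := by ring
    have hpf0 : 0 ≤ ∏ i ∈ s, f i := Finset.prod_nonneg fun i _ => (hf i).1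
    have hpf1 : ∏ i ∈ s, f i ≤ 1 := Finset.prod_le_one (fun i _ => (hf i).1) (fun i _ => (hf i).2)
    calc |f a * ∏ i ∈ s, f i - g a * ∏ i ∈ s, g i|
        ≤ |(f a - g a) * ∏ i ∈ s, f i| + |g a * (∏ i ∈ s, f i - ∏ i ∈ s, g i)| := by
          rw [key]; exact abs_add_le _ _
      _ ≤ |f a - g a| * 1 + 1 * |∏ i ∈ s, f i - ∏ i ∈ s, g i| := by
          rw [abs_mul, abs_mul]
          gcongr
          · rw [abs_of_nonneg hpf0]; exact hpf1
          · rw [abs_of_nonneg (hg a).1]; exact (hg a).2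
      _ ≤ |f a - g a| + ∑ i ∈ s, |f i - g i| := by
          rw [mul_one, one_mul]; gcongr

lemma fiber_card_le (n N : ℕ) (k : Fin N) (i : Fin n) :
    ((Finset.univ : Finset (Fin N ↪ Fin n)).filter fun g => g k = i).card ≤ n ^ (N - 1) := by
  classical
  have hinj : Set.InjOn (fun g : Fin N ↪ Fin n => fun x : {x : Fin N // x ≠ k} => g x.1)
      (((Finset.univ : Finset (Fin N ↪ Fin n)).filter fun g => g k = i) : Set (Fin N ↪ Fin n)) := by
    intro g1 h1 g2 h2 hgg
    simp only [Finset.coe_filter, Set.mem_setOf_eq, Finset.mem_univ, true_and] at h1 h2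
    ext x
    rcases eq_or_ne x k with rfl | hx
    · rw [h1, h2]
    · exact congrArg Fin.val (congrFun hgg ⟨x, hx⟩)
  have hcard := Finset.card_le_card_of_injOn _ (fun g _ => Finset.mem_univ _) hinj
  calc ((Finset.univ : Finset (Fin N ↪ Fin n)).filter fun g => g k = i).card
      ≤ (Finset.univ : Finset ({x : Fin N // x ≠ k} → Fin n)).card := hcard
    _ = n ^ (N - 1) := by
        rw [Finset.card_univ, Fintype.card_fun]
        congr 1
        · simp
        · rw [Fintype.card_subtype_compl]
          simp

lemma sum_emb_comp_le (n N : ℕ) (k : Fin N) (Z : Fin n → ℝ) (hZ : ∀ i, 0 ≤ Z i) :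
    ∑ g : Fin N ↪ Fin n, Z (g k) ≤ (n:ℝ) ^ (N - 1) * ∑ i, Z i := by
  classical
  have h1 : ∑ g : Fin N ↪ Fin n, Z (g k)
      = ∑ i : Fin n, ∑ g ∈ (Finset.univ : Finset (Fin N ↪ Fin n)).filter (fun g : Fin N ↪ Fin n => g k = i),
          Z (g k) :=
    (Finset.sum_fiberwise (Finset.univ : Finset (Fin N ↪ Fin n)) (fun g => g k)
      (fun g => Z (g k))).symm
  rw [h1]
  have h2 : ∀ i : Fin n,
      ∑ g ∈ (Finset.univ : Finset (Fin N ↪ Fin n)).filter (fun g : Fin N ↪ Fin n => g k = i), Z (g k)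
      ≤ (n:ℝ) ^ (N - 1) * Z i := by
    intro i
    have : ∑ g ∈ (Finset.univ : Finset (Fin N ↪ Fin n)).filter (fun g : Fin N ↪ Fin n => g k = i), Z (g k)
        = ((Finset.univ : Finset (Fin N ↪ Fin n)).filter (fun g : Fin N ↪ Fin n => g k = i)).card • Z i := by
      rw [← Finset.sum_const]
      apply Finset.sum_congr rfl
      intro g hg
      rw [(Finset.mem_filter.1 hg).2]
    rw [this, nsmul_eq_mul]
    apply mul_le_mul_of_nonneg_right _ (hZ i)
    calc (((Finset.univ : Finset (Fin N ↪ Fin n)).filter fun g => g k = i).card : ℝ)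
        ≤ ((n ^ (N-1) : ℕ) : ℝ) := by exact_mod_cast fiber_card_le n N k i
      _ = (n:ℝ) ^ (N-1) := by push_cast; ring
  calc ∑ i : Fin n, ∑ g ∈ (Finset.univ : Finset (Fin N ↪ Fin n)).filter (fun g : Fin N ↪ Fin n => g k = i), Z (g k)
      ≤ ∑ i : Fin n, (n:ℝ) ^ (N - 1) * Z i := Finset.sum_le_sum fun i _ => h2 i
    _ = (n:ℝ) ^ (N - 1) * ∑ i, Z i := by rw [Finset.mul_sum]


lemma cvec_diff (n mq : ℕ) (hmq : 2 ≤ mq) (X Y : Fin n → ℝ)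
    (hX : ∀ i, X i ∈ Set.Icc (0:ℝ) 1) (hY : ∀ i, Y i ∈ Set.Icc (0:ℝ) 1) :
    ∑ j, |Cvec n mq X j - Cvec n mq Y j|
      ≤ ((mq : ℝ) - 1) * (n:ℝ) ^ (mq - 1) * ∑ i, |X i - Y i| := by
  classical
  set N := mq - 1 with hN
  have hN1 : 1 ≤ N := by omega
  have step1 : ∀ j : Fin n, |Cvec n mq X j - Cvec n mq Y j|
      ≤ ∑ g : Fin N ↪ Fin n, ∑ k, |X (g k) - Y (g k)| := by
    intro j
    have e1 : Cvec n mq X j - Cvec n mq Y j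
        = ∑ g ∈ Finset.univ.filter (fun g : Fin N ↪ Fin n => ∀ k, g k ≠ j),
            (∏ k, X (g k) - ∏ k, Y (g k)) := by
      rw [Cvec, Cvec, ← Finset.sum_sub_distrib]
    rw [e1]
    calc |∑ g ∈ Finset.univ.filter (fun g : Fin N ↪ Fin n => ∀ k, g k ≠ j),
            (∏ k, X (g k) - ∏ k, Y (g k))|
        ≤ ∑ g ∈ Finset.univ.filter (fun g : Fin N ↪ Fin n => ∀ k, g k ≠ j),
            |∏ k, X (g k) - ∏ k, Y (g k)| := Finset.abs_sum_le_sum_abs _ _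
      _ ≤ ∑ g ∈ Finset.univ.filter (fun g : Fin N ↪ Fin n => ∀ k, g k ≠ j),
            ∑ k, |X (g k) - Y (g k)| := by
          apply Finset.sum_le_sum
          intro g _
          exact abs_prod_sub_prod_le Finset.univ (fun k => X (g k)) (fun k => Y (g k))
            (fun k => hX (g k)) (fun k => hY (g k))
      _ ≤ ∑ g : Fin N ↪ Fin n, ∑ k, |X (g k) - Y (g k)| := by
          apply Finset.sum_le_sum_of_subset_of_nonneg (Finset.filter_subset _ _)
          intro g _ _
          exact Finset.sum_nonneg fun k _ => abs_nonneg _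
  have step2 : ∑ g : Fin N ↪ Fin n, ∑ k, |X (g k) - Y (g k)|
      ≤ (N : ℝ) * ((n:ℝ) ^ (N - 1) * ∑ i, |X i - Y i|) := by
    rw [Finset.sum_comm]
    calc ∑ k : Fin N, ∑ g : Fin N ↪ Fin n, |X (g k) - Y (g k)|
        ≤ ∑ _k : Fin N, (n:ℝ) ^ (N - 1) * ∑ i, |X i - Y i| :=
          Finset.sum_le_sum fun k _ => sum_emb_comp_le n N k (fun i => |X i - Y i|) (fun i => abs_nonneg _)
      _ = (N : ℝ) * ((n:ℝ) ^ (N - 1) * ∑ i, |X i - Y i|) := by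
          rw [Finset.sum_const, nsmul_eq_mul, Finset.card_univ, Fintype.card_fin]
  calc ∑ j, |Cvec n mq X j - Cvec n mq Y j|
      ≤ ∑ _j : Fin n, ((N : ℝ) * ((n:ℝ) ^ (N - 1) * ∑ i, |X i - Y i|)) :=
        Finset.sum_le_sum fun j _ => le_trans (step1 j) step2
    _ = (n : ℝ) * ((N : ℝ) * ((n:ℝ) ^ (N - 1) * ∑ i, |X i - Y i|)) := by
        rw [Finset.sum_const, nsmul_eq_mul, Finset.card_univ, Fintype.card_fin]
    _ = ((mq : ℝ) - 1) * (n:ℝ) ^ (mq - 1) * ∑ i, |X i - Y i| := by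
        have hNc : (N : ℝ) = (mq : ℝ) - 1 := by
          rw [hN]; push_cast [Nat.cast_sub (by omega : 1 ≤ mq)]; ring
        have hpow : (n:ℝ) ^ (mq - 1) = (n:ℝ) * (n:ℝ) ^ (N - 1) := by
          have he : mq - 1 = (N - 1) + 1 := by omega
          rw [he, pow_succ]; ring
        rw [hNc, hpow]; ring

lemma card_avoid_eq (n M : ℕ) (j j' : Fin n) :
    ((Finset.univ : Finset (Fin M ↪ Fin n)).filter fun g => ∀ k, g k ≠ j).card
      = ((Finset.univ : Finset (Fin M ↪ Fin n)).filter fun g => ∀ k, g k ≠ j').card := by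
  classical
  refine Finset.card_bij' (fun g _ => g.trans (Equiv.swap j j').toEmbedding)
    (fun g _ => g.trans (Equiv.swap j j').toEmbedding) ?_ ?_ ?_ ?_
  · intro g hg
    simp only [Finset.mem_filter, Finset.mem_univ, true_and] at hg ⊢
    intro k
    simp only [Function.Embedding.trans_apply, Equiv.coe_toEmbedding]
    intro hcontra
    have hgk : g k = j := by
      apply (Equiv.swap j j').injective (a₁ := g k) (a₂ := j)
      rw [hcontra, Equiv.swap_apply_left]
    exact hg k hgk
  · intro g hg
    simp only [Finset.mem_filter, Finset.mem_univ, true_and] at hg ⊢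
    intro k
    simp only [Function.Embedding.trans_apply, Equiv.coe_toEmbedding]
    intro hcontra
    have hgk : g k = j' := by
      apply (Equiv.swap j j').injective (a₁ := g k) (a₂ := j')
      rw [hcontra, Equiv.swap_apply_right]
    exact hg k hgk
  · intro g _
    ext k
    simp [Function.Embedding.trans_apply]
  · intro g _
    ext k
    simp [Function.Embedding.trans_apply]

lemma cvec_const (n M : ℕ) (c : ℝ) (j : Fin n) :
    Cvec n M (fun _ => c) j
      = (((Finset.univ : Finset (Fin (M-1) ↪ Fin n)).filter fun g => ∀ k, g k ≠ j).card : ℝ)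
          * c ^ (M - 1) := by
  rw [Cvec]
  have : ∀ g : Fin (M-1) ↪ Fin n, (∏ _k : Fin (M-1), c) = c ^ (M-1) := by
    intro g
    rw [Finset.prod_const, Finset.card_univ, Fintype.card_fin]
  calc ∑ g ∈ Finset.univ.filter (fun g : Fin (M - 1) ↪ Fin n => ∀ k, g k ≠ j),
        (∏ _k : Fin (M-1), c)
      = ∑ _g ∈ Finset.univ.filter (fun g : Fin (M - 1) ↪ Fin n => ∀ k, g k ≠ j), c ^ (M-1) :=
        Finset.sum_congr rfl (fun g _ => this g)
    _ = _ := by rw [Finset.sum_const, nsmul_eq_mul]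


lemma phi_lip (n l : ℕ) (p : ℝ) (m : Fin l → ℕ) (hm : ∀ q, 2 ≤ m q) (α : Fin l → ℝ)
    (hn : 0 < n) (X Y : Fin n → ℝ)
    (hX : ∀ i, X i ∈ Set.Icc (0:ℝ) 1) (hY : ∀ i, Y i ∈ Set.Icc (0:ℝ) 1) :
    norm1 n (fun j => Phi n l p m α X j - Phi n l p m α Y j)
      ≤ ((∑ q, |α q| * (m q : ℝ) * ((m q : ℝ) - 1)) / 4) * norm1 n (fun i => X i - Y i) := by
  have hnR : (0:ℝ) < n := by exact_mod_cast hn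
  set D := norm1 n (fun i => X i - Y i) with hD
  have stageA : ∀ j, |Phi n l p m α X j - Phi n l p m α Y j|
      ≤ (1/2) * ∑ q, |(m q : ℝ) * α q / (2 * (n:ℝ) ^ (m q - 1))|
          * |Cvec n (m q) X j - Cvec n (m q) Y j| := by
    intro j
    have e1 : Phi n l p m α X j - Phi n l p m α Y j
        = (Real.tanh (gradf n l p m α X j) - Real.tanh (gradf n l p m α Y j)) / 2 := by
      rw [Phi, Phi]; ring
    have e3 : gradf n l p m α X j - gradf n l p m α Y j
        = ∑ q, ((m q : ℝ) * α q / (2 * (n:ℝ) ^ (m q - 1)))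
            * (Cvec n (m q) X j - Cvec n (m q) Y j) := by
      rw [gradf, gradf]
      simp only [mul_sub, Finset.sum_sub_distrib]
      ring
    rw [e1, abs_div, abs_two]
    calc |Real.tanh (gradf n l p m α X j) - Real.tanh (gradf n l p m α Y j)| / 2
        ≤ |gradf n l p m α X j - gradf n l p m α Y j| / 2 := by
          have h := tanh_lip (gradf n l p m α X j) (gradf n l p m α Y j)
          linarith
      _ ≤ (∑ q, |(m q : ℝ) * α q / (2 * (n:ℝ) ^ (m q - 1))|
            * |Cvec n (m q) X j - Cvec n (m q) Y j|) / 2 := by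
          have h2 : |gradf n l p m α X j - gradf n l p m α Y j|
              ≤ ∑ q, |(m q : ℝ) * α q / (2 * (n:ℝ) ^ (m q - 1))|
                  * |Cvec n (m q) X j - Cvec n (m q) Y j| := by
            rw [e3]
            refine (Finset.abs_sum_le_sum_abs _ _).trans ?_
            exact le_of_eq (Finset.sum_congr rfl fun q _ => abs_mul _ _)
          linarith
      _ = (1/2) * ∑ q, |(m q : ℝ) * α q / (2 * (n:ℝ) ^ (m q - 1))|
            * |Cvec n (m q) X j - Cvec n (m q) Y j| := by ring
  calc norm1 n (fun j => Phi n l p m α X j - Phi n l p m α Y j)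
      ≤ ∑ j, (1/2) * ∑ q, |(m q : ℝ) * α q / (2 * (n:ℝ) ^ (m q - 1))|
          * |Cvec n (m q) X j - Cvec n (m q) Y j| := Finset.sum_le_sum fun j _ => stageA j
    _ = (1/2) * ∑ q, |(m q : ℝ) * α q / (2 * (n:ℝ) ^ (m q - 1))|
          * ∑ j, |Cvec n (m q) X j - Cvec n (m q) Y j| := by
        rw [← Finset.mul_sum, Finset.sum_comm]
        congr 1
        exact Finset.sum_congr rfl fun q _ => (Finset.mul_sum _ _ _).symm
    _ ≤ (1/2) * ∑ q, |(m q : ℝ) * α q / (2 * (n:ℝ) ^ (m q - 1))|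
          * (((m q : ℝ) - 1) * (n:ℝ) ^ (m q - 1) * D) := by
        apply mul_le_mul_of_nonneg_left _ (by norm_num : (0:ℝ) ≤ 1/2)
        refine Finset.sum_le_sum fun q _ => ?_
        exact mul_le_mul_of_nonneg_left (cvec_diff n (m q) (hm q) X Y hX hY) (abs_nonneg _)
    _ = (1/2) * ∑ q, (|α q| * (m q : ℝ) * ((m q : ℝ) - 1)) * (D/2) := by
        congr 1
        refine Finset.sum_congr rfl fun q _ => ?_
        have hpq : (0:ℝ) < (n:ℝ) ^ (m q - 1) := by positivity
        have h1 : |(m q : ℝ) * α q / (2 * (n:ℝ) ^ (m q - 1))|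
            = (m q : ℝ) * |α q| / (2 * (n:ℝ) ^ (m q - 1)) := by
          rw [abs_div, abs_mul, abs_of_pos (by positivity : (0:ℝ) < 2 * (n:ℝ) ^ (m q - 1)),
            abs_of_nonneg (by positivity : (0:ℝ) ≤ ((m q : ℕ) : ℝ))]
        rw [h1]
        field_simp
    _ = ((∑ q, |α q| * (m q : ℝ) * ((m q : ℝ) - 1)) / 4) * D := by
        rw [← Finset.sum_mul]
        ring

lemma continuous_tanh' : Continuous Real.tanh := by
  have hdiff : Differentiable ℝ Real.tanh := fun x => (tanh_hasDerivAt x).differentiableAt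
  exact hdiff.continuous

end Stmt14Aux


/-- if `J_α = ¼ Σ_q |α_q| m_q (m_q - 1) < 1`, then `X = Φ(X)` has a unique
solution `X_c` in `[0,1]ⁿ`, `X_c` is a constant vector, and every `X ∈ X_f` satisfies
`‖X - X_c‖₁ ≤ (5000 C_α²/(1 - J_α)) n^{7/8}`. -/

theorem stmt14 (n l : ℕ) (p : ℝ) (hp : p ∈ Set.Ioo (0:ℝ) 1)
    (m : Fin l → ℕ) (hm : ∀ q, 2 ≤ m q) (hminj : Function.Injective m)
    (α : Fin l → ℝ)
    (hJ : (∑ q, |α q| * (m q : ℝ) * ((m q : ℝ) - 1)) / 4 < 1) :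
    ∃ Xc : Fin n → ℝ, (∀ i, Xc i ∈ Set.Icc (0:ℝ) 1) ∧
      Phi n l p m α Xc = Xc ∧
      (∀ Y : Fin n → ℝ, (∀ i, Y i ∈ Set.Icc (0:ℝ) 1) → Phi n l p m α Y = Y → Y = Xc) ∧
      (∃ c : ℝ, Xc = fun _ => c) ∧
      ∀ X ∈ Xf n l p m α,
        norm1 n (fun i => X i - Xc i) ≤
          5000 * (Calpha l p m α) ^ 2 /
            (1 - (∑ q, |α q| * (m q : ℝ) * ((m q : ℝ) - 1)) / 4) * (n : ℝ) ^ ((7:ℝ)/8) := by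

  classical
  set J := (∑ q, |α q| * (m q : ℝ) * ((m q : ℝ) - 1)) / 4 with hJdef
  have hJ0 : 0 ≤ J := by
    apply div_nonneg _ (by norm_num)
    apply Finset.sum_nonneg; intro q _
    have h2 : (2:ℝ) ≤ (m q : ℝ) := by exact_mod_cast hm q
    have hnn := mul_nonneg (mul_nonneg (abs_nonneg (α q))
      (by linarith : (0:ℝ) ≤ (m q : ℝ))) (by linarith : (0:ℝ) ≤ (m q : ℝ) - 1)
    linarith
  rcases Nat.eq_zero_or_pos n with hn0 | hn
  · subst hn0
    refine ⟨fun _ => 0, fun i => i.elim0, funext fun j => j.elim0,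
      fun Y _ _ => funext fun i => i.elim0, ⟨0, rfl⟩, ?_⟩
    intro X _
    have h1 : norm1 0 (fun i => X i - (fun _ : Fin 0 => (0:ℝ)) i) = 0 := by
      rw [norm1]; simp
    have h2 : ((0:ℕ):ℝ) ^ ((7:ℝ)/8) = 0 := by
      rw [Nat.cast_zero]; exact Real.zero_rpow (by norm_num)
    rw [h1, h2, mul_zero]
  · have hnR : (0:ℝ) < n := by exact_mod_cast hn
    set j0 : Fin n := ⟨0, hn⟩ with hj0
    have hCeq : ∀ (c : ℝ) (M : ℕ) (j : Fin n),
        Cvec n M (fun _ => c) j = Cvec n M (fun _ => c) j0 := by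
      intro c M j
      rw [cvec_const, cvec_const, card_avoid_eq n (M - 1) j j0]
    have hconst : ∀ (c : ℝ) (j : Fin n),
        Phi n l p m α (fun _ => c) j = Phi n l p m α (fun _ => c) j0 := by
      intro c j
      simp only [Phi, gradf, hCeq]
    set h : ℝ → ℝ := fun c => Phi n l p m α (fun _ => c) j0 with hh
    have hrange : ∀ c, h c ∈ Set.Icc (0:ℝ) 1 := by
      intro c
      have ht1 := _root_.tanh_lt_one (gradf n l p m α (fun _ => c) j0)
      have ht2 := _root_.neg_one_lt_tanh (gradf n l p m α (fun _ => c) j0)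
      simp only [hh, Phi]
      constructor <;> [linarith; linarith]
    have hcont : Continuous h := by
      have he : h = fun c => (1 + Real.tanh ((∑ q, ((m q : ℝ) * α q / (2 * (n:ℝ) ^ (m q - 1)))
          * ((((Finset.univ : Finset (Fin (m q - 1) ↪ Fin n)).filter
              fun g => ∀ k, g k ≠ j0).card : ℝ) * c ^ (m q - 1)))
          + Real.log (p / (1 - p)) / 2)) / 2 := by
        funext c
        simp only [hh, Phi, gradf, cvec_const]
      rw [he]
      apply Continuous.div_const
      apply Continuous.add continuous_const
      apply continuous_tanh'.comp
      apply Continuous.add _ continuous_const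
      exact continuous_finset_sum _ fun q _ =>
        continuous_const.mul (continuous_const.mul (continuous_pow _))
    have hgc : Continuous fun c => h c - c := hcont.sub continuous_id
    have hiv := intermediate_value_Icc' (by norm_num : (0:ℝ) ≤ 1) hgc.continuousOn
    have h0mem : (0:ℝ) ∈ Set.Icc (h 1 - 1) (h 0 - 0) := by
      have r0 := hrange 0
      have r1 := hrange 1
      exact ⟨by linarith [r1.2], by linarith [r0.1]⟩
    obtain ⟨c, hc01, hcfix⟩ := hiv h0mem
    have hfix : h c = c := by
      have : h c - c = 0 := hcfix
      linarith
    have hPhiXc : Phi n l p m α (fun _ => c) = fun _ => c := by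
      funext j
      calc Phi n l p m α (fun _ => c) j = h c := hconst c j
        _ = c := hfix
    have hXcIcc : ∀ i : Fin n, (fun _ : Fin n => c) i ∈ Set.Icc (0:ℝ) 1 := fun _ => hc01
    refine ⟨fun _ => c, hXcIcc, hPhiXc, ?_, ⟨c, rfl⟩, ?_⟩
    · intro Y hY hYfix
      have hlip := phi_lip n l p m hm α hn Y (fun _ => c) hY hXcIcc
      have heq : (fun j => Phi n l p m α Y j - Phi n l p m α (fun _ => c) j)
          = fun j => Y j - (fun _ : Fin n => c) j := by
        funext j
        rw [congrFun hYfix j, congrFun hPhiXc j]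
      rw [heq] at hlip
      have hDnn : 0 ≤ norm1 n (fun i => Y i - (fun _ : Fin n => c) i) :=
        Finset.sum_nonneg fun i _ => abs_nonneg _
      have hD0 : norm1 n (fun i => Y i - (fun _ : Fin n => c) i) = 0 := by nlinarith
      funext i
      have hz := (Finset.sum_eq_zero_iff_of_nonneg
        (fun i (_ : i ∈ Finset.univ) => abs_nonneg (Y i - (fun _ : Fin n => c) i))).1 hD0
        i (Finset.mem_univ i)
      have : Y i - c = 0 := by
        have := abs_eq_zero.1 hz
        simpa using this
      linarith
    · intro X hXmem
      obtain ⟨hX1, hX2⟩ := hXmem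
      have hlip := phi_lip n l p m hm α hn X (fun _ => c) hX1 hXcIcc
      have htri : norm1 n (fun i => X i - (fun _ : Fin n => c) i)
          ≤ norm1 n (fun j => X j - Phi n l p m α X j)
            + norm1 n (fun j => Phi n l p m α X j - Phi n l p m α (fun _ => c) j) := by
        rw [norm1, norm1, norm1, ← Finset.sum_add_distrib]
        apply Finset.sum_le_sum
        intro i _
        have he : X i - (fun _ : Fin n => c) i
            = (X i - Phi n l p m α X i) + (Phi n l p m α X i - Phi n l p m α (fun _ => c) i) := by
          rw [congrFun hPhiXc i]
          ring
        rw [he]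
        exact abs_add_le _ _
      have h1J : 0 < 1 - J := by linarith
      rw [div_mul_eq_mul_div, le_div_iff₀ h1J]
      have hDnn : 0 ≤ norm1 n (fun i => X i - (fun _ : Fin n => c) i) :=
        Finset.sum_nonneg fun i _ => abs_nonneg _
      nlinarith [hX2, hlip, htri]

end
end

section
/- Suppose α_q ≥ 0 for all q = 1,…,l and let X ∈ [0,1]^n. Then φ_α(min_i X_i) ≤ min_i Φ(X)_i and max_i Φ(X)_i ≤ φ_α(max_i X_i), where Φ(X) = (1ₙ + tanh(∇f(X)))/2. -/
open MeasureTheory ProbabilityTheory Real Set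

noncomputable section

lemma my_tanh_eq (z : ℝ) : Real.tanh z = 1 - 2 / (Real.exp (2*z) + 1) := by
  rw [Real.tanh_eq_sinh_div_cosh, Real.sinh_eq, Real.cosh_eq]
  have h1 : (0:ℝ) < Real.exp z := Real.exp_pos z
  have h2 : Real.exp (2*z) = Real.exp z * Real.exp z := by rw [two_mul, Real.exp_add]
  have h3 : Real.exp (-z) = (Real.exp z)⁻¹ := Real.exp_neg z
  have h4 : (0:ℝ) < Real.exp (2*z) + 1 := by positivity
  rw [h2, h3]
  field_simp
  ring

lemma my_tanh_mono {x y : ℝ} (h : x ≤ y) : Real.tanh x ≤ Real.tanh y := by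
  rw [my_tanh_eq, my_tanh_eq]
  have h1 : (0:ℝ) < Real.exp (2*x) + 1 := by positivity
  have h2 : Real.exp (2*x) + 1 ≤ Real.exp (2*y) + 1 := by
    have := Real.exp_le_exp.mpr (by linarith : 2*x ≤ 2*y); linarith
  have := div_le_div_of_nonneg_left (by norm_num : (0:ℝ) ≤ 2) h1 h2
  linarith [div_le_div_of_nonneg_left (by norm_num : (0:ℝ) ≤ 2) h1 h2]


lemma my_ratio (n k : ℕ) (hn : 0 < n) :
    ((n-1).descFactorial k : ℝ) / (n:ℝ)^k = ∏ i ∈ Finset.Icc 1 k, (1 - (i:ℝ)/n) := by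
  have hn' : (n:ℝ) ≠ 0 := Nat.cast_ne_zero.mpr hn.ne'
  rcases le_or_gt n k with hnk | hkn
  · have h0 : (n-1).descFactorial k = 0 :=
      Nat.descFactorial_eq_zero_iff_lt.mpr (by omega)
    rw [h0]
    rw [Finset.prod_eq_zero (Finset.mem_Icc.mpr ⟨hn, hnk⟩ : n ∈ Finset.Icc 1 k)]
    · simp
    · rw [div_self hn']; ring
  · have hcast : ((n-1).descFactorial k : ℝ) = ∏ i ∈ Finset.range k, ((n:ℝ) - (1+i)) := by
      rw [Nat.descFactorial_eq_prod_range, Nat.cast_prod]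
      apply Finset.prod_congr rfl
      intro i hi
      have hik : i < k := Finset.mem_range.mp hi
      have h1 : 1 + i ≤ n := by omega
      rw [Nat.sub_sub, Nat.cast_sub h1]
      push_cast; ring
    have hrhs : ∏ i ∈ Finset.Icc 1 k, (1 - (i:ℝ)/n)
        = ∏ i ∈ Finset.range k, (1 - ((1+i:ℕ):ℝ)/n) := by
      rw [← Finset.Ico_add_one_right_eq_Icc, Finset.prod_Ico_eq_prod_range]
      simp
    rw [hcast, hrhs]
    rw [show ((n:ℝ))^k = ∏ _i ∈ Finset.range k, (n:ℝ) by
      rw [Finset.prod_const, Finset.card_range]]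
    rw [← Finset.prod_div_distrib]
    apply Finset.prod_congr rfl
    intro i _
    push_cast
    field_simp


lemma my_card_avoid (n k : ℕ) (j : Fin n) :
    (Finset.univ.filter (fun g : Fin k ↪ Fin n => ∀ i, g i ≠ j)).card =
      (n-1).descFactorial k := by
  rw [← Fintype.card_subtype]
  have e : {g : Fin k ↪ Fin n // ∀ i, g i ≠ j} ≃ (Fin k ↪ {i : Fin n // i ≠ j}) :=
    { toFun := fun g => ⟨fun i => ⟨g.1 i, g.2 i⟩,
        fun a b h => g.1.injective (congrArg Subtype.val h)⟩
      invFun := fun g => ⟨⟨fun i => (g i).1,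
        fun a b h => g.injective (Subtype.ext h)⟩, fun i => (g i).2⟩
      left_inv := fun g => rfl
      right_inv := fun g => rfl }
  rw [Fintype.card_congr e, Fintype.card_embedding_eq, Fintype.card_fin]
  congr 1
  have : Fintype.card {i : Fin n // ¬ (i = j)} = n - 1 := by
    rw [Fintype.card_subtype_compl, Fintype.card_subtype_eq, Fintype.card_fin]
  simpa using this

lemma le_Cvec (n m : ℕ) (X : Fin n → ℝ) (j : Fin n) (a : ℝ) (ha : 0 ≤ a)
    (h : ∀ i, a ≤ X i) :
    ((n-1).descFactorial (m-1) : ℝ) * a^(m-1) ≤ Cvec n m X j := by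
  rw [Cvec, ← my_card_avoid n (m-1) j]
  have key : ∀ g ∈ Finset.univ.filter (fun g : Fin (m-1) ↪ Fin n => ∀ i, g i ≠ j),
      a^(m-1) ≤ ∏ k, X (g k) := by
    intro g _
    calc a^(m-1) = ∏ _k : Fin (m-1), a := by
          rw [Finset.prod_const, Finset.card_univ, Fintype.card_fin]
      _ ≤ ∏ k, X (g k) := Finset.prod_le_prod (fun _ _ => ha) (fun k _ => h (g k))
  have := Finset.card_nsmul_le_sum _ _ _ key
  simpa [nsmul_eq_mul] using this

lemma Cvec_le (n m : ℕ) (X : Fin n → ℝ) (j : Fin n) (b : ℝ)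
    (h0 : ∀ i, 0 ≤ X i) (hb : ∀ i, X i ≤ b) :
    Cvec n m X j ≤ ((n-1).descFactorial (m-1) : ℝ) * b^(m-1) := by
  rw [Cvec, ← my_card_avoid n (m-1) j]
  have key : ∀ g ∈ Finset.univ.filter (fun g : Fin (m-1) ↪ Fin n => ∀ i, g i ≠ j),
      ∏ k, X (g k) ≤ b^(m-1) := by
    intro g _
    calc ∏ k, X (g k) ≤ ∏ _k : Fin (m-1), b :=
          Finset.prod_le_prod (fun k _ => h0 (g k)) (fun k _ => hb (g k))
      _ = b^(m-1) := by rw [Finset.prod_const, Finset.card_univ, Fintype.card_fin]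
  have := Finset.sum_le_card_nsmul _ _ _ key
  simpa [nsmul_eq_mul] using this

theorem key15 (n l : ℕ) (hn : 0 < n) (p : ℝ)
    (m : Fin l → ℕ) (α : Fin l → ℝ) (hα : ∀ q, 0 ≤ α q)
    (X : Fin n → ℝ) (hX : ∀ i, X i ∈ Set.Icc (0:ℝ) 1)
    (a b : ℝ) (ha0 : 0 ≤ a) (hab : ∀ i, a ≤ X i ∧ X i ≤ b) (j : Fin n) :
    phiA n l p m α a ≤ Phi n l p m α X j ∧ Phi n l p m α X j ≤ phiA n l p m α b := by
  have hn' : (n:ℝ) ≠ 0 := Nat.cast_ne_zero.mpr hn.ne'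
  -- per-q term comparison
  have hterm : ∀ (q : Fin l),
      ((m q : ℝ) * α q * (∏ i ∈ Finset.Icc 1 (m q - 1), (1 - (i : ℝ) / n)) *
        a ^ (m q - 1)) / 2
        ≤ ((m q : ℝ) * α q / (2 * (n : ℝ) ^ (m q - 1))) * Cvec n (m q) X j ∧
      ((m q : ℝ) * α q / (2 * (n : ℝ) ^ (m q - 1))) * Cvec n (m q) X j
        ≤ ((m q : ℝ) * α q * (∏ i ∈ Finset.Icc 1 (m q - 1), (1 - (i : ℝ) / n)) *
        b ^ (m q - 1)) / 2 := by
    intro q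
    set k := m q - 1 with hk
    have hP : ((n-1).descFactorial k : ℝ) = (∏ i ∈ Finset.Icc 1 k, (1 - (i : ℝ) / n)) * (n:ℝ)^k := by
      rw [← my_ratio n k hn]
      field_simp
    have hc : 0 ≤ (m q : ℝ) * α q / (2 * (n : ℝ) ^ k) :=
      div_nonneg (mul_nonneg (Nat.cast_nonneg _) (hα q)) (by positivity)
    constructor
    · calc ((m q : ℝ) * α q * (∏ i ∈ Finset.Icc 1 k, (1 - (i : ℝ) / n)) * a ^ k) / 2
          = ((m q : ℝ) * α q / (2 * (n : ℝ) ^ k)) *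
            (((n-1).descFactorial k : ℝ) * a^k) := by
            rw [hP]
            field_simp
        _ ≤ _ := by
            apply mul_le_mul_of_nonneg_left _ hc
            exact le_Cvec n (m q) X j a ha0 (fun i => (hab i).1)
    · calc ((m q : ℝ) * α q / (2 * (n : ℝ) ^ k)) * Cvec n (m q) X j
          ≤ ((m q : ℝ) * α q / (2 * (n : ℝ) ^ k)) *
            (((n-1).descFactorial k : ℝ) * b^k) := by
            apply mul_le_mul_of_nonneg_left _ hc
            exact Cvec_le n (m q) X j b (fun i => (hX i).1) (fun i => (hab i).2)
        _ = ((m q : ℝ) * α q * (∏ i ∈ Finset.Icc 1 k, (1 - (i : ℝ) / n)) * b ^ k) / 2 := by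
            rw [hP]; field_simp
  have hsum1 : Real.log (p / (1 - p)) / 2 +
      (∑ q, (m q : ℝ) * α q * (∏ i ∈ Finset.Icc 1 (m q - 1), (1 - (i : ℝ) / n)) *
        a ^ (m q - 1)) / 2 ≤ gradf n l p m α X j := by
    rw [gradf, Finset.sum_div]
    have := Finset.sum_le_sum (fun q (_ : q ∈ Finset.univ) => (hterm q).1)
    linarith
  have hsum2 : gradf n l p m α X j ≤ Real.log (p / (1 - p)) / 2 +
      (∑ q, (m q : ℝ) * α q * (∏ i ∈ Finset.Icc 1 (m q - 1), (1 - (i : ℝ) / n)) *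
        b ^ (m q - 1)) / 2 := by
    rw [gradf, Finset.sum_div]
    have := Finset.sum_le_sum (fun q (_ : q ∈ Finset.univ) => (hterm q).2)
    linarith
  constructor
  · rw [phiA, Phi]
    have := my_tanh_mono hsum1
    linarith
  · rw [phiA, Phi]
    have := my_tanh_mono hsum2
    linarith


/-- if `α_q ≥ 0` for all `q` and `X ∈ [0,1]ⁿ`, then
`φ_α(minᵢ Xᵢ) ≤ minᵢ Φ(X)ᵢ` and `maxᵢ Φ(X)ᵢ ≤ φ_α(maxᵢ Xᵢ)`. -/
theorem stmt15 (n l : ℕ) (hn : 0 < n) (p : ℝ) (hp : p ∈ Set.Ioo (0:ℝ) 1)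
    (m : Fin l → ℕ) (hm : ∀ q, 2 ≤ m q) (hminj : Function.Injective m)
    (α : Fin l → ℝ) (hα : ∀ q, 0 ≤ α q)
    (X : Fin n → ℝ) (hX : ∀ i, X i ∈ Set.Icc (0:ℝ) 1) :
    phiA n l p m α (Finset.univ.inf' ⟨⟨0, hn⟩, Finset.mem_univ _⟩ X) ≤
      Finset.univ.inf' ⟨⟨0, hn⟩, Finset.mem_univ _⟩ (Phi n l p m α X) ∧
    Finset.univ.sup' ⟨⟨0, hn⟩, Finset.mem_univ _⟩ (Phi n l p m α X) ≤
      phiA n l p m α (Finset.univ.sup' ⟨⟨0, hn⟩, Finset.mem_univ _⟩ X) := by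
  have ha0 : (0:ℝ) ≤ Finset.univ.inf' ⟨⟨0, hn⟩, Finset.mem_univ _⟩ X :=
    Finset.le_inf' _ _ (fun i _ => (hX i).1)
  have hab : ∀ i, Finset.univ.inf' ⟨⟨0, hn⟩, Finset.mem_univ _⟩ X ≤ X i ∧
      X i ≤ Finset.univ.sup' ⟨⟨0, hn⟩, Finset.mem_univ _⟩ X := fun i =>
    ⟨Finset.inf'_le _ (Finset.mem_univ i), Finset.le_sup' _ (Finset.mem_univ i)⟩
  constructor
  · exact Finset.le_inf' _ _ (fun j _ => (key15 n l hn p m α hα X hX _ _ ha0 hab j).1)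
  · exact Finset.sup'_le _ _ (fun j _ => (key15 n l hn p m α hα X hX _ _ ha0 hab j).2)


end
end

section
/- Let n > 4 be an even integer and set N = (1/(2n²))(n/2 − 1)(n/2 − 2). For α > 0 let a₂ = a₂(α) ∈ (0,1) be the unique solution of 1 − 2a = tanh(N α a²). Then there exists α₀ > 0 such that for all α ≥ α₀, a₂ < √( log(4Nα) / (4Nα) ); equivalently, a₂ < √( n² log( (4α/n²) · binom(n/2 − 1, 2) ) / ( 4α · binom(n/2 − 1, 2) ) ). -/
open MeasureTheory ProbabilityTheory Real Set

noncomputable section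

theorem one_sub_tanh_lt_aux (x : ℝ) : 1 - Real.tanh x < 2 * Real.exp (-(2*x)) := by
  have h1 : 0 < Real.exp x := Real.exp_pos x
  have h2 : 0 < Real.exp (-x) := Real.exp_pos (-x)
  have h3 : Real.exp (-x) * Real.exp x = 1 := by rw [← Real.exp_add]; simp
  have h4 : Real.exp (-(2*x)) = Real.exp (-x) * Real.exp (-x) := by
    rw [← Real.exp_add]; ring_nf
  have hB : 0 < Real.exp x + Real.exp (-x) := by positivity
  have h5 : 1 - Real.tanh x = 2 * Real.exp (-x) / (Real.exp x + Real.exp (-x)) := by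
    rw [Real.tanh_eq_sinh_div_cosh, Real.sinh_eq, Real.cosh_eq]
    field_simp
    ring
  rw [h5, h4, div_lt_iff₀ hB]
  nlinarith [mul_pos h2 (mul_pos h2 h2)]

/-- with `N = (1/(2n²))(n/2 - 1)(n/2 - 2)`, there exists `α₀ > 0` such
that for all `α ≥ α₀`, the unique solution `a₂ ∈ (0,1)` of `1 - 2a = tanh(Nαa²)`
satisfies `a₂ < √(log(4Nα)/(4Nα))`. -/
theorem stmt17 (n : ℕ) (hn : 4 < n) (hne : Even n) (N : ℝ)
    (hN : N = 1 / (2 * (n:ℝ)^2) * ((n:ℝ)/2 - 1) * ((n:ℝ)/2 - 2)) :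
    ∃ α₀ : ℝ, 0 < α₀ ∧ ∀ α : ℝ, α₀ ≤ α → ∀ a ∈ Set.Ioo (0:ℝ) 1,
      1 - 2 * a = Real.tanh (N * α * a^2) →
      a < Real.sqrt (Real.log (4 * N * α) / (4 * N * α)) := by
  have h6 : (6:ℕ) ≤ n := by obtain ⟨r, hr⟩ := hne; omega
  have h6' : (6:ℝ) ≤ (n:ℝ) := by exact_mod_cast h6
  have hNpos : 0 < N := by 
    have p1 : (0:ℝ) < 1/(2*(n:ℝ)^2) := by positivity
    have p2 : (0:ℝ) < (n:ℝ)/2 - 1 := by linarith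
    have p3 : (0:ℝ) < (n:ℝ)/2 - 2 := by linarith
    rw [hN]; exact mul_pos (mul_pos p1 p2) p3
  refine ⟨Real.exp 2 / (4*N), by positivity, ?_⟩
  intro α hα a ha heq
  obtain ⟨ha0, ha1⟩ := ha
  have h4Nα : Real.exp 2 ≤ 4*N*α := by
    have := (div_le_iff₀ (show (0:ℝ) < 4*N by linarith)).mp hα
    linarith
  have h4pos : 0 < 4*N*α := lt_of_lt_of_le (Real.exp_pos 2) h4Nα
  have hNα : 0 < N*α := by linarith
  set L := Real.log (4*N*α) with hL
  have hL2 : 2 ≤ L := by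
    calc (2:ℝ) = Real.log (Real.exp 2) := (Real.log_exp 2).symm
      _ ≤ L := Real.log_le_log (Real.exp_pos 2) h4Nα
  by_contra hcon
  push_neg at hcon
  have ht2 : L / (4*N*α) ≤ a^2 := by
    have hs := Real.sq_sqrt (show (0:ℝ) ≤ L/(4*N*α) by positivity)
    nlinarith [Real.sqrt_nonneg (L/(4*N*α)), hcon]
  have hx0 : L/4 ≤ N*α*a^2 := by
    have he : N*α*(L/(4*N*α)) = L/4 := by
      have hα0 : α ≠ 0 := by rintro rfl; simp at hNα
      field_simp
    nlinarith [mul_le_mul_of_nonneg_left ht2 hNα.le]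
  have key := one_sub_tanh_lt_aux (N*α*a^2)
  have hexp : Real.exp (-(2*(N*α*a^2))) ≤ Real.exp (-(L/2)) :=
    Real.exp_le_exp.mpr (by linarith)
  have ha_lt : a < Real.exp (-(L/2)) := by
    rw [← heq] at key; linarith
  have hsq : Real.exp (-(L/2))^2 = 1/(4*N*α) := by
    rw [sq, ← Real.exp_add]
    have : -(L/2) + -(L/2) = -L := by ring
    rw [this, Real.exp_neg, hL, Real.exp_log h4pos, one_div]
  have hfin1 : a^2 < 1/(4*N*α) := by
    nlinarith [mul_self_lt_mul_self ha0.le ha_lt, sq_nonneg a]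
  have h2d : (2:ℝ)/(4*N*α) ≤ L/(4*N*α) := by gcongr
  have hfin : (2:ℝ)/(4*N*α) < 1/(4*N*α) := lt_of_le_of_lt (h2d.trans ht2) hfin1
  rw [div_lt_div_iff₀ h4pos h4pos] at hfin
  nlinarith [hfin, h4pos]

end
end

section
/- Let n > 4 be an even integer and let c > (n−2)/n. For α > 0 let a₁ = a₁(α) ∈ (0,1) be the unique solution of 1 − 2a = tanh( (α/(2n²)) (n/2 − 1) ( (n/2)(a + 1)² − 2a² ) ). Then there exists α₀ > 0 such that a₁ > e^{−cα} for all α ≥ α₀. -/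
open MeasureTheory ProbabilityTheory Real Set

noncomputable section

set_option maxHeartbeats 1000000 in
/-- for `c > (n-2)/n` there exists `α₀ > 0` such that for all `α ≥ α₀`,
the unique solution `a₁ ∈ (0,1)` of
`1 - 2a = tanh((α/(2n²))(n/2 - 1)((n/2)(a+1)² - 2a²))` satisfies `a₁ > e^{-cα}`. -/
theorem stmt18 (n : ℕ) (hn : 4 < n) (hne : Even n) (c : ℝ)
    (hc : ((n:ℝ) - 2) / n < c) :
    ∃ α₀ : ℝ, 0 < α₀ ∧ ∀ α : ℝ, α₀ ≤ α → ∀ a ∈ Set.Ioo (0:ℝ) 1,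
      1 - 2 * a = Real.tanh (α / (2 * (n:ℝ)^2) * ((n:ℝ)/2 - 1) *
        ((n:ℝ)/2 * (a + 1)^2 - 2 * a^2)) →
      Real.exp (-c * α) < a := by
  refine ⟨100, by norm_num, ?_⟩
  intro α hα a ha heq
  obtain ⟨ha0, ha1⟩ := ha
  have hn6 : (6:ℕ) ≤ n := by obtain ⟨k, hk⟩ := hne; omega
  have hnR : (6:ℝ) ≤ n := by exact_mod_cast hn6
  have hc23 : (2:ℝ)/3 < c := by
    have h23 : (2:ℝ)/3 ≤ ((n:ℝ)-2)/n := by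
      rw [div_le_div_iff₀ (by norm_num) (by linarith)]; linarith
    linarith
  set t := α / (2 * (n:ℝ)^2) * ((n:ℝ)/2 - 1) * ((n:ℝ)/2 * (a + 1)^2 - 2 * a^2) with ht
  by_contra hcon
  push_neg at hcon
  set ε := Real.exp (-c * α) with hε
  have hεpos : 0 < ε := Real.exp_pos _
  have hca : 1 ≤ c * α := by nlinarith
  have hexp1 : (2:ℝ) ≤ Real.exp 1 := by
    have := Real.add_one_le_exp 1; linarith
  have hε2 : ε ≤ 1/2 := by
    have h1 : ε ≤ Real.exp (-1) := Real.exp_le_exp.2 (by linarith)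
    have h2 : Real.exp (-1) ≤ 1/2 := by
      rw [Real.exp_neg]
      have := Real.exp_pos 1
      rw [inv_le_comm₀ this (by norm_num)]
      linarith
    linarith
  -- tanh formula
  have hexpt := Real.exp_pos t
  have htanh : Real.tanh t = (Real.exp (2*t) - 1) / (Real.exp (2*t) + 1) := by
    rw [Real.tanh_eq_sinh_div_cosh, Real.sinh_eq, Real.cosh_eq, Real.exp_neg,
      two_mul, Real.exp_add]
    have h1 : Real.exp t * Real.exp t + 1 > 0 := by positivity
    field_simp
  set E := Real.exp (2*t) with hE
  clear_value E
  have hEpos : 0 < E := by rw [hE]; positivity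
  -- a * (E + 1) = 1
  have haE : a * (E + 1) = 1 := by
    rw [htanh] at heq
    have hE1 : E + 1 ≠ 0 := by positivity
    field_simp at heq
    nlinarith [heq]
    
  -- bounds on t
  have hM0 : 0 ≤ (n:ℝ)/2 * (a + 1)^2 - 2 * a^2 := by nlinarith
  have ht0 : 0 ≤ t := by
    apply mul_nonneg (mul_nonneg (by positivity) (by linarith)) hM0
  have hE1 : 1 ≤ E := by
    rw [hE, ← Real.exp_zero]
    exact Real.exp_le_exp.2 (by positivity)
  have ha12 : a ≤ 1/2 := le_trans hcon hε2
  have hsq : (a + 1)^2 ≤ 9/4 := by nlinarith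
  have hMub : (n:ℝ)/2 * (a + 1)^2 - 2 * a^2 ≤ 9 * n / 8 := by
    have h5 : (n:ℝ)/2 * (a + 1)^2 ≤ (n:ℝ)/2 * (9/4) :=
      mul_le_mul_of_nonneg_left hsq (by positivity)
    nlinarith [sq_nonneg a]
  have htub : t ≤ 9 * α / 32 := by
    have h1 : ((n:ℝ)/2 - 1) * ((n:ℝ)/2 * (a + 1)^2 - 2 * a^2) ≤ 9 * (n:ℝ)^2 / 16 := by
      have ha2 : ((n:ℝ)/2 - 1) * ((n:ℝ)/2 * (a + 1)^2 - 2 * a^2) ≤ ((n:ℝ)/2) * ((n:ℝ)/2 * (a + 1)^2 - 2 * a^2) :=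
        mul_le_mul_of_nonneg_right (by linarith) hM0
      have hb2 : ((n:ℝ)/2) * ((n:ℝ)/2 * (a + 1)^2 - 2 * a^2) ≤ ((n:ℝ)/2) * (9 * n / 8) :=
        mul_le_mul_of_nonneg_left hMub (by positivity)
      nlinarith
    have h2 : t = α / (2 * (n:ℝ)^2) * (((n:ℝ)/2 - 1) * ((n:ℝ)/2 * (a + 1)^2 - 2 * a^2)) := by
      rw [ht]; ring
    have h3 : α / (2 * (n:ℝ)^2) * (((n:ℝ)/2 - 1) * ((n:ℝ)/2 * (a + 1)^2 - 2 * a^2))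
        ≤ α / (2 * (n:ℝ)^2) * (9 * (n:ℝ)^2 / 16) :=
      mul_le_mul_of_nonneg_left h1 (by positivity)
    have h4 : α / (2 * (n:ℝ)^2) * (9 * (n:ℝ)^2 / 16) = 9 * α / 32 := by
      field_simp; ring
    rw [h2]; linarith
  have hEub : E ≤ Real.exp (9 * α / 16) := by rw [hE]; exact Real.exp_le_exp.2 (by linarith)
  -- final contradiction
  have hkey : ε * Real.exp (9 * α / 16) = Real.exp (-c * α + 9 * α / 16) := by
    rw [hε, ← Real.exp_add]
  have hsmall : Real.exp (-c * α + 9 * α / 16) < 1/2 := by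
    have : (-c * α + 9 * α / 16 : ℝ) < -1 := by nlinarith
    have h1 : Real.exp (-c * α + 9 * α / 16) < Real.exp (-1) := Real.exp_lt_exp.2 this
    have h2 : Real.exp (-1) ≤ 1/2 := by
      rw [Real.exp_neg]
      rw [inv_le_comm₀ (Real.exp_pos 1) (by norm_num)]
      linarith
    linarith
  have hchain : (1:ℝ) ≤ 2 * (ε * E) := by nlinarith [hcon, haE, hE1, hEpos, ha0]
  have : ε * E ≤ ε * Real.exp (9 * α / 16) :=
    mul_le_mul_of_nonneg_left hEub (le_of_lt hεpos)
  nlinarith [hkey, hsmall, hchain, this]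


end
end
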